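/- Let r > 1 and set α = (r+1)/2 and r′ = r/(r-1). Let x, y > 0 satisfy x + y = 1/r′. Then there exist p, q ≥ 1 with 1/p′ + 1/q′ = 1/r′ such that C^{-α r′} · x^{r′/p′} · y^{r′/q′} ≥ 1/r′, where C = C(p,q,r) = c_p c_q/c_r with c_s = s^{1/s}/(s′)^{1/s′}. -/

import Mathlib

/-- The conjugate exponent `s′ = s/(s-1)` (with the Lean convention giving
`conjExp 1 = 0`, i.e. `1/1′ = 0`). -/
noncomputable def conjExp (s : ℝ) : ℝ := s / (s - 1)

/-- The constant `c_s = s^(1/s) / (s′)^(1/s′)` (with `c_1 = 1` by convention). -/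
noncomputable def youngc (s : ℝ) : ℝ := s ^ (1 / s) / conjExp s ^ (1 / conjExp s)

/-- The sharp Young constant `C(p,q,r) = c_p c_q / c_r`. -/
noncomputable def youngC (p q r : ℝ) : ℝ := youngc p * youngc q / youngc r

open Real Set

lemma young_G_concave (s a k : ℝ) (hs0 : 0 < s) (hs1 : s < 1)
    (ha : a = 1 / (2 * (1 - s))) (hk : k = (2 - s) / (2 * s * (1 - s))) :
    ConcaveOn ℝ (Icc 0 s)
      (fun t => a * (negMulLog t + negMulLog (s - t))
        - k * (negMulLog (1 - t) + negMulLog (1 - s + t))) := by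
  have h1s : (0:ℝ) < 1 - s := by linarith
  set G : ℝ → ℝ := fun t => a * (negMulLog t + negMulLog (s - t))
      - k * (negMulLog (1 - t) + negMulLog (1 - s + t)) with hG
  set G' : ℝ → ℝ := fun t => a * (log (s - t) - log t) - k * (log (1 - t) - log (1 - s + t))
    with hG'
  set G'' : ℝ → ℝ := fun t => a * (-(s - t)⁻¹ - t⁻¹) - k * (-(1 - t)⁻¹ - (1 - s + t)⁻¹) with hG''
  apply concaveOn_of_hasDerivWithinAt2_nonpos (f' := G') (f'' := G'') (convex_Icc 0 s)
  · fun_prop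
  · intro t ht
    rw [interior_Icc] at ht
    obtain ⟨ht0, hts⟩ := ht
    have hst : (0:ℝ) < s - t := by linarith
    have h1t : (0:ℝ) < 1 - t := by linarith
    have h1st : (0:ℝ) < 1 - s + t := by linarith
    have h1 : HasDerivAt negMulLog (-log t - 1) t := hasDerivAt_negMulLog ht0.ne'
    have h2 : HasDerivAt (fun u : ℝ => negMulLog (s - u)) ((-log (s - t) - 1) * (-1)) t :=
      (hasDerivAt_negMulLog hst.ne').comp t ((hasDerivAt_id t).const_sub s)
    have h3 : HasDerivAt (fun u : ℝ => negMulLog (1 - u)) ((-log (1 - t) - 1) * (-1)) t :=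
      (hasDerivAt_negMulLog h1t.ne').comp t ((hasDerivAt_id t).const_sub 1)
    have h4 : HasDerivAt (fun u : ℝ => negMulLog (1 - s + u)) ((-log (1 - s + t) - 1) * 1) t :=
      (hasDerivAt_negMulLog h1st.ne').comp t ((hasDerivAt_id t).const_add (1 - s))
    have H := ((h1.add h2).const_mul a).sub ((h3.add h4).const_mul k)
    have : HasDerivAt G (G' t) t := by
      refine H.congr_deriv ?_
      simp only [hG']
      ring
    exact this.hasDerivWithinAt
  · intro t ht
    rw [interior_Icc] at ht
    obtain ⟨ht0, hts⟩ := ht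
    have hst : (0:ℝ) < s - t := by linarith
    have h1t : (0:ℝ) < 1 - t := by linarith
    have h1st : (0:ℝ) < 1 - s + t := by linarith
    have hl1 : HasDerivAt (fun u : ℝ => log (s - u)) ((s - t)⁻¹ * (-1)) t :=
      (Real.hasDerivAt_log hst.ne').comp t ((hasDerivAt_id t).const_sub s)
    have hl2 : HasDerivAt (fun u : ℝ => log u) t⁻¹ t := Real.hasDerivAt_log ht0.ne'
    have hl3 : HasDerivAt (fun u : ℝ => log (1 - u)) ((1 - t)⁻¹ * (-1)) t :=
      (Real.hasDerivAt_log h1t.ne').comp t ((hasDerivAt_id t).const_sub 1)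
    have hl4 : HasDerivAt (fun u : ℝ => log (1 - s + u)) ((1 - s + t)⁻¹ * 1) t :=
      (Real.hasDerivAt_log h1st.ne').comp t ((hasDerivAt_id t).const_add (1 - s))
    have H := ((hl1.sub hl2).const_mul a).sub ((hl3.sub hl4).const_mul k)
    have : HasDerivAt G' (G'' t) t := by
      refine H.congr_deriv ?_
      simp only [hG'']
      ring
    exact this.hasDerivWithinAt
  · intro t ht
    rw [interior_Icc] at ht
    obtain ⟨ht0, hts⟩ := ht
    have hst : (0:ℝ) < s - t := by linarith
    have h1t : (0:ℝ) < 1 - t := by linarith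
    have h1st : (0:ℝ) < 1 - s + t := by linarith
    have key : k * ((1 - t)⁻¹ + (1 - s + t)⁻¹) ≤ a * (t⁻¹ + (s - t)⁻¹) := by
      rw [ha, hk, inv_eq_one_div, inv_eq_one_div, inv_eq_one_div, inv_eq_one_div,
        div_add_div _ _ h1t.ne' h1st.ne', div_add_div _ _ ht0.ne' hst.ne',
        div_mul_div_comm, div_mul_div_comm,
        div_le_div_iff₀ (by positivity) (by positivity)]
      nlinarith [mul_nonneg (mul_nonneg h1s.le h1s.le) (sq_nonneg (s - 2*t)),
        mul_nonneg h1s.le (sq_nonneg (s - 2*t)), sq_nonneg (s - 2*t)]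
    simp only [hG'']
    nlinarith [key]

lemma young_key (s a k : ℝ) (hs0 : 0 < s) (hs1 : s < 1)
    (ha : a = 1 / (2 * (1 - s))) (hk : k = (2 - s) / (2 * s * (1 - s)))
    (x : ℝ) (hx : 0 ≤ x) (hxs : x ≤ s) :
    a * (negMulLog x + negMulLog (s - x)) - k * (negMulLog (1 - x) + negMulLog (1 - s + x))
      ≥ a * negMulLog s - k * negMulLog (1 - s) := by
  have hconc := young_G_concave s a k hs0 hs1 ha hk
  have h0mem : (0:ℝ) ∈ Icc (0:ℝ) s := ⟨le_rfl, hs0.le⟩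
  have hsmem : s ∈ Icc (0:ℝ) s := ⟨hs0.le, le_rfl⟩
  have hw1 : (0:ℝ) ≤ (s - x) / s := div_nonneg (by linarith) hs0.le
  have hw2 : (0:ℝ) ≤ x / s := by positivity
  have hsum : (s - x) / s + x / s = 1 := by field_simp; ring
  have H := hconc.2 h0mem hsmem hw1 hw2 hsum
  simp only [smul_eq_mul, mul_zero, zero_add] at H
  rw [div_mul_cancel₀ _ hs0.ne'] at H
  have hGx : x / s * s = x := div_mul_cancel₀ _ hs0.ne'
  have e0 : a * (negMulLog 0 + negMulLog (s - 0)) - k * (negMulLog (1 - 0) + negMulLog (1 - s + 0))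
      = a * negMulLog s - k * negMulLog (1 - s) := by
    simp
  have es : a * (negMulLog s + negMulLog (s - s)) - k * (negMulLog (1 - s) + negMulLog (1 - s + s))
      = a * negMulLog s - k * negMulLog (1 - s) := by
    simp
  rw [e0, es] at H
  calc a * negMulLog s - k * negMulLog (1 - s)
      = ((s - x) / s) * (a * negMulLog s - k * negMulLog (1 - s))
        + (x / s) * (a * negMulLog s - k * negMulLog (1 - s)) := by
        rw [← add_mul, hsum, one_mul]
    _ ≤ _ := H

/-- Key lemma: for `r > 1`, `α = (r+1)/2`, and `x, y > 0` with `x + y = 1/r′`,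
there exist `p, q ≥ 1` with `1/p′ + 1/q′ = 1/r′` such that
`C^(-α r′) x^(r′/p′) y^(r′/q′) ≥ 1/r′`. -/
theorem exists_young_exponents (r : ℝ) (hr : 1 < r) (x y : ℝ)
    (hx : 0 < x) (hy : 0 < y) (hxy : x + y = 1 / conjExp r) :
    ∃ p q : ℝ, 1 ≤ p ∧ 1 ≤ q ∧ 1 / conjExp p + 1 / conjExp q = 1 / conjExp r ∧
      youngC p q r ^ (-((r + 1) / 2 * conjExp r)) * x ^ (conjExp r / conjExp p) *
          y ^ (conjExp r / conjExp q) ≥ 1 / conjExp r := by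
  have hr0 : (0:ℝ) < r := by linarith
  have hr1 : (0:ℝ) < r - 1 := by linarith
  set s : ℝ := x + y with hsdef
  have hs_eq : s = (r - 1) / r := by rw [hxy, conjExp, one_div_div]
  have hs0 : 0 < s := by positivity
  have hs1 : s < 1 := by rw [hs_eq, div_lt_one hr0]; linarith
  have h1s : (0:ℝ) < 1 - s := by linarith
  have h1s_eq : 1 - s = 1 / r := by rw [hs_eq]; field_simp; ring
  have hcr_s : conjExp r = 1 / s := by
    rw [conjExp, hs_eq, one_div_div]
  have hr_s : r = 1 / (1 - s) := by rw [h1s_eq, one_div_one_div]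
  have hxs : x < s := by rw [hsdef]; linarith
  have hys : y < s := by rw [hsdef]; linarith
  have hx1 : x < 1 := hxs.trans hs1
  have hy1 : y < 1 := hys.trans hs1
  have h1x : (0:ℝ) < 1 - x := by linarith
  have h1y : (0:ℝ) < 1 - y := by linarith
  set p : ℝ := 1 / (1 - x) with hpdef
  set q : ℝ := 1 / (1 - y) with hqdef
  have hp0 : 0 < p := by positivity
  have hq0 : 0 < q := by positivity
  have hp1 : 1 ≤ p := by rw [hpdef, le_div_iff₀ h1x]; linarith
  have hq1 : 1 ≤ q := by rw [hqdef, le_div_iff₀ h1y]; linarith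
  have hcp : conjExp p = 1 / x := by
    rw [conjExp, hpdef]; rw [show 1 / (1 - x) - 1 = x / (1 - x) by field_simp; ring]; field_simp
  have hcq : conjExp q = 1 / y := by
    rw [conjExp, hqdef]; rw [show 1 / (1 - y) - 1 = y / (1 - y) by field_simp; ring]; field_simp
  have hcp0 : 0 < conjExp p := by rw [hcp]; positivity
  have hcq0 : 0 < conjExp q := by rw [hcq]; positivity
  have h1cp : 1 / conjExp p = x := by rw [hcp, one_div_one_div]
  have h1cq : 1 / conjExp q = y := by rw [hcq, one_div_one_div]
  have h1p : 1 / p = 1 - x := one_div_one_div _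
  have h1q : 1 / q = 1 - y := one_div_one_div _
  have hcr0 : 0 < conjExp r := by rw [hcr_s]; positivity
  have h1cr : 1 / conjExp r = s := by rw [hcr_s, one_div_one_div]
  have h1r : 1 / r = 1 - s := h1s_eq.symm
  -- logs of the constants
  have hlcp : Real.log (youngc p) = negMulLog (1 - x) - negMulLog x := by
    rw [youngc, Real.log_div (Real.rpow_pos_of_pos hp0 _).ne'
      (Real.rpow_pos_of_pos hcp0 _).ne', Real.log_rpow hp0, Real.log_rpow hcp0,
      h1p, h1cp, hcp, hpdef]
    simp only [one_div, Real.log_inv, Real.negMulLog]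
    ring
  have hlcq : Real.log (youngc q) = negMulLog (1 - y) - negMulLog y := by
    rw [youngc, Real.log_div (Real.rpow_pos_of_pos hq0 _).ne'
      (Real.rpow_pos_of_pos hcq0 _).ne', Real.log_rpow hq0, Real.log_rpow hcq0,
      h1q, h1cq, hcq, hqdef]
    simp only [one_div, Real.log_inv, Real.negMulLog]
    ring
  have hlcr : Real.log (youngc r) = negMulLog (1 - s) - negMulLog s := by
    rw [youngc, Real.log_div (Real.rpow_pos_of_pos hr0 _).ne'
      (Real.rpow_pos_of_pos hcr0 _).ne', Real.log_rpow hr0, Real.log_rpow hcr0,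
      h1r, h1cr, hcr_s]
    rw [hr_s]
    simp only [one_div, Real.log_inv, Real.negMulLog]
    ring
  have hcpP : 0 < youngc p := by
    rw [youngc]; exact div_pos (Real.rpow_pos_of_pos hp0 _) (Real.rpow_pos_of_pos hcp0 _)
  have hcqP : 0 < youngc q := by
    rw [youngc]; exact div_pos (Real.rpow_pos_of_pos hq0 _) (Real.rpow_pos_of_pos hcq0 _)
  have hcrP : 0 < youngc r := by
    rw [youngc]; exact div_pos (Real.rpow_pos_of_pos hr0 _) (Real.rpow_pos_of_pos hcr0 _)
  have hCpos : 0 < youngC p q r := by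
    rw [youngC]; exact div_pos (mul_pos hcpP hcqP) hcrP
  have hlC : Real.log (youngC p q r) =
      (negMulLog (1 - x) - negMulLog x) + (negMulLog (1 - y) - negMulLog y)
        - (negMulLog (1 - s) - negMulLog s) := by
    rw [youngC, Real.log_div (mul_pos hcpP hcqP).ne' hcrP.ne', Real.log_mul hcpP.ne' hcqP.ne',
      hlcp, hlcq, hlcr]
  set k : ℝ := (2 - s) / (2 * s * (1 - s)) with hkdef
  set a : ℝ := 1 / (2 * (1 - s)) with hadef
  have he : -((r + 1) / 2 * conjExp r) = -k := by
    rw [hcr_s, hr_s, hkdef]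
    field_simp
    ring
  have hep : conjExp r / conjExp p = x / s := by
    rw [hcr_s, hcp]; field_simp
  have heq : conjExp r / conjExp q = y / s := by
    rw [hcr_s, hcq]; field_simp
  have hkey := young_key s a k hs0 hs1 hadef hkdef x hx.le hxs.le
  have hsx : s - x = y := by rw [hsdef]; ring
  have hsx' : 1 - s + x = 1 - y := by rw [hsdef]; ring
  rw [hsx, hsx'] at hkey
  refine ⟨p, q, hp1, hq1, by rw [h1cp, h1cq]; exact hxy, ?_⟩
  rw [hep, heq, h1cr, ge_iff_le, Real.rpow_def_of_pos hCpos, Real.rpow_def_of_pos hx,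
    Real.rpow_def_of_pos hy, ← Real.exp_add, ← Real.exp_add,
    ← Real.log_le_iff_le_exp hs0, hlC, he]
  have hid : ((negMulLog (1 - x) - negMulLog x) + (negMulLog (1 - y) - negMulLog y)
        - (negMulLog (1 - s) - negMulLog s)) * (-k)
        + Real.log x * (x / s) + Real.log y * (y / s) - Real.log s
      = (a * (negMulLog x + negMulLog y) - k * (negMulLog (1 - x) + negMulLog (1 - y)))
        - (a * negMulLog s - k * negMulLog (1 - s)) := by
    rw [hkdef, hadef]
    simp only [Real.negMulLog]
    field_simp
    ring
  linarith [hkey, hid]
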